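/- arXiv:1301.2418 — 2 statements merged into one kernel-verified Lean document; each statement's English description precedes it below -/
import Mathlib

section
/- Let $k$ be a field and let $I$ be an ideal of $k[t,X_1,\ldots,X_n]$. Suppose $\sqrt{I} = P_1 \cap \cdots \cap P_s$ with $P_1,\ldots,P_s$ prime ideals, and let $e \ge 1$ be an integer with $\sqrt{I}^e \subseteq I$. Fix positive integers $c_1, \ldots, c_s$ and set $\beta' := e \cdot \sum_{l=1}^s c_l$. If $x(t) \in k[[t]]^n$ satisfies $f(t, x(t)) \in (t)^{\beta'}$ for all $f \in I$, then there exists an index $l$ such that $g(t, x(t)) \in (t)^{c_l}$ for all $g \in P_l$. -/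
/-- Evaluation of `f ∈ k[t,X₁,…,Xₙ]` at `(t, x₁(t),…,xₙ(t))`: variable `0` is `t`. -/
noncomputable def evalAt {k : Type*} [Field k] {n : ℕ} (x : Fin n → PowerSeries k) :
    MvPolynomial (Fin (n + 1)) k →ₐ[k] PowerSeries k :=
  MvPolynomial.aeval (Fin.cases PowerSeries.X x)

lemma X_pow_dvd_iff_le_order' {k : Type*} [Field k] {m : ℕ} {φ : PowerSeries k} :
    (PowerSeries.X : PowerSeries k) ^ m ∣ φ ↔ (m : ℕ∞) ≤ φ.order := by
  rw [PowerSeries.X_pow_dvd_iff]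
  constructor
  · intro h
    exact PowerSeries.nat_le_order φ m h
  · intro h i hi
    exact PowerSeries.coeff_of_lt_order i (lt_of_lt_of_le (by exact_mod_cast hi) h)

lemma order_prod' {k : Type*} [Field k] {ι : Type*} (t : Finset ι) (f : ι → PowerSeries k) :
    PowerSeries.order (∏ i ∈ t, f i) = ∑ i ∈ t, PowerSeries.order (f i) := by
  classical
  induction t using Finset.induction with
  | empty => simp [PowerSeries.order_one]
  | insert _ _ h ih => rw [Finset.prod_insert h, Finset.sum_insert h, PowerSeries.order_mul, ih]

theorem approx_solution_of_some_minimal_prime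
    {k : Type*} [Field k] {n s : ℕ} (hs : 0 < s)
    (I : Ideal (MvPolynomial (Fin (n + 1)) k))
    (P : Fin s → Ideal (MvPolynomial (Fin (n + 1)) k))
    (hP : ∀ l, (P l).IsPrime) (hrad : I.radical = ⨅ l, P l)
    (e : ℕ) (he : 1 ≤ e) (hpow : I.radical ^ e ≤ I)
    (c : Fin s → ℕ) (hc : ∀ l, 0 < c l)
    (x : Fin n → PowerSeries k)
    (hx : ∀ f ∈ I, (PowerSeries.X : PowerSeries k) ^ (e * ∑ l, c l) ∣ evalAt x f) :
    ∃ l, ∀ g ∈ P l, (PowerSeries.X : PowerSeries k) ^ (c l) ∣ evalAt x g := by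
  by_contra hcon
  push_neg at hcon
  choose g hg hdvd using hcon
  -- each evaluated g l is nonzero with small order
  have horder : ∀ l, ∃ o : ℕ, (evalAt x (g l)).order = (o : ℕ∞) ∧ o < c l := by
    intro l
    have h1 : ¬ ((c l : ℕ∞) ≤ (evalAt x (g l)).order) := by
      rw [← X_pow_dvd_iff_le_order']
      exact hdvd l
    rcases WithTop.lt_iff_exists_coe.mp (lt_of_not_ge h1) with ⟨o, ho, hlt⟩
    exact ⟨o, ho, WithTop.coe_lt_coe.mp hlt⟩
  choose o ho hlt using horder
  -- the product
  set G : MvPolynomial (Fin (n + 1)) k := ∏ l, g l with hG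
  have hGmem : G ∈ I.radical := by
    rw [hrad, Ideal.mem_iInf]
    intro l
    obtain ⟨d, hd⟩ := Finset.dvd_prod_of_mem g (Finset.mem_univ l)
    rw [hG, hd]
    exact Ideal.mul_mem_right _ _ (hg l)
  have hGI : G ^ e ∈ I := hpow (Ideal.pow_mem_pow hGmem e)
  have hdvdGe := hx _ hGI
  rw [X_pow_dvd_iff_le_order'] at hdvdGe
  have hev : evalAt x (G ^ e) = (∏ l, evalAt x (g l)) ^ e := by
    rw [map_pow, hG, map_prod]
  rw [hev] at hdvdGe
  have hordpow : ((∏ l, evalAt x (g l)) ^ e).order = ((e * ∑ l, o l : ℕ) : ℕ∞) := by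
    have : (∏ l, evalAt x (g l)) ^ e = ∏ _i ∈ Finset.range e, ∏ l, evalAt x (g l) := by
      rw [Finset.prod_const, Finset.card_range]
    rw [this, order_prod']
    simp only [order_prod', ho]
    rw [Finset.sum_const, Finset.card_range]
    push_cast
    rw [nsmul_eq_mul]
  rw [hordpow, Nat.cast_le] at hdvdGe
  have hsum : ∑ l, o l < ∑ l, c l := by
    apply Finset.sum_lt_sum_of_nonempty
    · exact Finset.univ_nonempty_iff.mpr (Fin.pos_iff_nonempty.mp hs)
    · intro l _; exact hlt l
  have h2 : e * ∑ l, o l < e * ∑ l, c l :=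
    (mul_lt_mul_iff_right₀ (show 0 < e from he)).mpr hsum
  omega
end

section
/- Let $k$ be a field, let $f = aX^{\alpha} + bX^{\beta} \in k[X_1,\ldots,X_n]$ be a binomial with $a, b \in k$ and multi-exponents $\alpha, \beta \in \mathbb{N}^n$. Let $x_j(t,z) = u_j(t,z) W_j(t,z)$ for $1 \le j \le n$, where each $u_j$ is a unit in $k[[t,z]]$ and each $W_j$ is a Weierstrass polynomial in $z$ of degree $d_j$ with coefficients in $(t)k[[t]]$. Set $D_\alpha := \sum_j \alpha_j d_j$ and $D_\beta := \sum_j \beta_j d_j$. If $f(x_1,\ldots,x_n) \in (t,z)^i$ with $i > \max(D_\alpha, D_\beta)$, and $a, b$ are both nonzero, then $D_\alpha = D_\beta$. -/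
/-- `F ∈ (t,z)^i` in `k[[t,z]] = (k[[t]])[[z]]`: all coefficients of
total degree `< i` vanish.  Here `b` is the exponent of `z` and `a` that of `t`. -/
def Mem2 {k : Type*} [Field k] (i : ℕ) (F : PowerSeries (PowerSeries k)) : Prop :=
  ∀ a b : ℕ, a + b < i → PowerSeries.coeff a (PowerSeries.coeff b F) = 0

open PowerSeries in
lemma binomial_aux {k : Type*} [Field k] (U V : PowerSeries k) (hU : IsUnit U)
    {D E : ℕ} (hDE : D < E) :
    PowerSeries.coeff D (U * PowerSeries.X ^ D + V * PowerSeries.X ^ E) ≠ 0 := by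
  rw [map_add, coeff_mul_X_pow', coeff_mul_X_pow']
  simp only [le_refl, if_true, Nat.sub_self, not_le.mpr hDE, if_false, add_zero,
    coeff_zero_eq_constantCoeff]
  have := isUnit_constantCoeff U hU
  exact this.ne_zero

theorem binomial_weierstrass_degrees_match
    {k : Type*} [Field k] {n : ℕ}
    (a b : k) (ha : a ≠ 0) (hb : b ≠ 0) (α β : Fin n → ℕ)
    (u : Fin n → PowerSeries (PowerSeries k)) (hu : ∀ j, IsUnit (u j))
    (d : Fin n → ℕ) (c : (j : Fin n) → Fin (d j) → PowerSeries k)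
    (hc : ∀ j l, (PowerSeries.X : PowerSeries k) ∣ c j l)
    (x : Fin n → PowerSeries (PowerSeries k))
    (hx : ∀ j, x j = u j * (∑ l : Fin (d j), PowerSeries.C (c j l)
        * PowerSeries.X ^ (l : ℕ) + PowerSeries.X ^ (d j)))
    (i : ℕ) (hi : max (∑ j, α j * d j) (∑ j, β j * d j) < i)
    (h : Mem2 i (algebraMap k _ a * ∏ j, x j ^ α j
        + algebraMap k _ b * ∏ j, x j ^ β j)) :
    ∑ j, α j * d j = ∑ j, β j * d j := by
  classical
  set φ : PowerSeries (PowerSeries k) →+* PowerSeries k :=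
    PowerSeries.map (PowerSeries.constantCoeff (R := k)) with hφ
  -- image of x j
  have hxφ : ∀ j, φ (x j) = φ (u j) * PowerSeries.X ^ (d j) := by
    intro j
    rw [hx j, map_mul]
    congr 1
    rw [map_add, map_sum, map_pow, PowerSeries.map_X]
    have : ∀ l : Fin (d j),
        φ (PowerSeries.C (c j l) * PowerSeries.X ^ (l : ℕ)) = 0 := by
      intro l
      rw [map_mul, hφ, PowerSeries.map_C]
      obtain ⟨q, hq⟩ := hc j l
      rw [hq]
      simp
    rw [Finset.sum_congr rfl fun l _ => this l]
    simp
  have hprod : ∀ γ : Fin n → ℕ,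
      φ (∏ j, x j ^ γ j) = (∏ j, φ (u j) ^ γ j) * PowerSeries.X ^ (∑ j, γ j * d j) := by
    intro γ
    rw [map_prod]
    have : ∀ j : Fin n, φ (x j ^ γ j) = φ (u j) ^ γ j * PowerSeries.X ^ (γ j * d j) := by
      intro j
      rw [map_pow, hxφ j, mul_pow, ← pow_mul, mul_comm (d j) (γ j)]
    rw [Finset.prod_congr rfl fun j _ => this j, Finset.prod_mul_distrib,
      Finset.prod_pow_eq_pow_sum]
  have halg : ∀ r : k, φ (algebraMap k (PowerSeries (PowerSeries k)) r)
      = PowerSeries.C r := by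
    intro r
    rw [PowerSeries.algebraMap_apply, hφ, PowerSeries.map_C, PowerSeries.algebraMap_apply]
    simp
  set U : PowerSeries k := PowerSeries.C a * ∏ j, φ (u j) ^ α j with hUdef
  set V : PowerSeries k := PowerSeries.C b * ∏ j, φ (u j) ^ β j with hVdef
  have hU : IsUnit U := by
    apply IsUnit.mul
    · exact (PowerSeries.C (R := k)).isUnit_map (isUnit_iff_ne_zero.mpr ha)
    · exact Finset.prod_induction _ IsUnit (fun _ _ => IsUnit.mul) isUnit_one
        (fun j _ => ((hu j).map φ).pow _)
  have hV : IsUnit V := by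
    apply IsUnit.mul
    · exact (PowerSeries.C (R := k)).isUnit_map (isUnit_iff_ne_zero.mpr hb)
    · exact Finset.prod_induction _ IsUnit (fun _ _ => IsUnit.mul) isUnit_one
        (fun j _ => ((hu j).map φ).pow _)
  have hF : φ (algebraMap k _ a * ∏ j, x j ^ α j + algebraMap k _ b * ∏ j, x j ^ β j)
      = U * PowerSeries.X ^ (∑ j, α j * d j) + V * PowerSeries.X ^ (∑ j, β j * d j) := by
    rw [map_add, map_mul, map_mul, hprod, hprod, halg, halg, hUdef, hVdef]
    ring
  have hcoeff : ∀ m, m < i → PowerSeries.coeff m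
      (φ (algebraMap k _ a * ∏ j, x j ^ α j + algebraMap k _ b * ∏ j, x j ^ β j)) = 0 := by
    intro m hm
    rw [hφ, PowerSeries.coeff_map, ← PowerSeries.coeff_zero_eq_constantCoeff_apply]
    exact h 0 m (by simpa using hm)
  by_contra hne
  rcases lt_or_gt_of_ne hne with hlt | hlt
  · exact binomial_aux U V hU hlt
      (by rw [← hF]; exact hcoeff _ (lt_of_le_of_lt (le_max_left _ _) hi))
  · refine binomial_aux V U hV hlt ?_
    rw [add_comm (V * _), ← hF]
    exact hcoeff _ (lt_of_le_of_lt (le_max_right _ _) hi)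
end
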